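/- (OPR equilibrium characterization.) Assume d_A ≠ 0, d_B ≠ 0, and p < d_A². Let α_A⁰ ∈ (0,1) be the unique solution of f_A(α) = 2. Then the profile (α_A⁰, 0) is a Nash equilibrium of the digital representative game if and only if p ≥ d_B² − λ(α_A⁰)·d_A·d_B/2. -/

import Mathlib

open Set Filter

/-- Team decision formed by the two digital representatives. -/
noncomputable def teamDec (lam : ℝ → ℝ) (thA thB mu : ℝ) (aA aB : ℝ) : ℝ :=
  (lam aA * thA + (1 - lam aA) * mu + lam aB * thB + (1 - lam aB) * mu) / 2

/-- Alice's total loss: preference loss plus communication cost. -/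
noncomputable def lossA (lam c : ℝ → ℝ) (thA thB mu : ℝ) (aA aB : ℝ) : ℝ :=
  (thA - teamDec lam thA thB mu aA aB) ^ 2 + c aA

/-- Bob's total loss: preference loss plus communication cost. -/
noncomputable def lossB (lam c : ℝ → ℝ) (thA thB mu : ℝ) (aA aB : ℝ) : ℝ :=
  (thB - teamDec lam thA thB mu aA aB) ^ 2 + c aB

/-- The function `f_m(α) = λ(α) + (2/d_m²)·c'(α)/λ'(α)`. -/
noncomputable def fFun (lam lam' c' : ℝ → ℝ) (d : ℝ) (α : ℝ) : ℝ :=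
  lam α + (2 / d ^ 2) * (c' α / lam' α)

/-- The function `h_m(α) = 2 − λ(α)·d_{−m}/d_m`. -/
noncomputable def hFun (lam : ℝ → ℝ) (dm dOther : ℝ) (α : ℝ) : ℝ :=
  2 - lam α * dOther / dm

/-- `a` is a best response of Alice to Bob's revelation `aB`:
it minimizes `α ↦ L_A(α, aB)` over `[0,1)`. -/
def IsBestRespA (lam c : ℝ → ℝ) (thA thB mu : ℝ) (a aB : ℝ) : Prop :=
  a ∈ Set.Ico (0:ℝ) 1 ∧
    ∀ x ∈ Set.Ico (0:ℝ) 1, lossA lam c thA thB mu a aB ≤ lossA lam c thA thB mu x aB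

/-- Nash equilibrium of the digital representative game. -/
def IsNashEq (lam c : ℝ → ℝ) (thA thB mu : ℝ) (aA aB : ℝ) : Prop :=
  aA ∈ Set.Ico (0:ℝ) 1 ∧ aB ∈ Set.Ico (0:ℝ) 1 ∧
  (∀ α ∈ Set.Ico (0:ℝ) 1, lossA lam c thA thB mu aA aB ≤ lossA lam c thA thB mu α aB) ∧
  (∀ α ∈ Set.Ico (0:ℝ) 1, lossB lam c thA thB mu aA aB ≤ lossB lam c thA thB mu aA α)

section Aux

open Set

/-- On a compact interval, nonpositive derivative gives antitonicity. -/
lemma aux_antiOn_Icc (f f' : ℝ → ℝ) (a b : ℝ)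
    (hd : ∀ x ∈ Set.Icc a b, HasDerivAt f (f' x) x)
    (h0 : ∀ x ∈ Set.Icc a b, f' x ≤ 0) : AntitoneOn f (Set.Icc a b) := by
  apply antitoneOn_of_deriv_nonpos (convex_Icc a b)
  · exact fun x hx => (hd x hx).continuousAt.continuousWithinAt
  · intro x hx
    rw [interior_Icc] at hx
    exact ((hd x (Set.Ioo_subset_Icc_self hx)).differentiableAt).differentiableWithinAt
  · intro x hx
    rw [interior_Icc] at hx
    rw [(hd x (Set.Ioo_subset_Icc_self hx)).deriv]
    exact h0 x (Set.Ioo_subset_Icc_self hx)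

/-- On a compact interval, nonnegative derivative gives monotonicity. -/
lemma aux_monoOn_Icc (f f' : ℝ → ℝ) (a b : ℝ)
    (hd : ∀ x ∈ Set.Icc a b, HasDerivAt f (f' x) x)
    (h0 : ∀ x ∈ Set.Icc a b, 0 ≤ f' x) : MonotoneOn f (Set.Icc a b) := by
  apply monotoneOn_of_deriv_nonneg (convex_Icc a b)
  · exact fun x hx => (hd x hx).continuousAt.continuousWithinAt
  · intro x hx
    rw [interior_Icc] at hx
    exact ((hd x (Set.Ioo_subset_Icc_self hx)).differentiableAt).differentiableWithinAt
  · intro x hx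
    rw [interior_Icc] at hx
    rw [(hd x (Set.Ioo_subset_Icc_self hx)).deriv]
    exact h0 x (Set.Ioo_subset_Icc_self hx)

/-- Interior critical point of a function with nondecreasing derivative minimizes on `[0,1)`. -/
lemma aux_min_of_deriv (f f' : ℝ → ℝ) (a : ℝ) (ha : a ∈ Set.Ico (0:ℝ) 1)
    (hd : ∀ x ∈ Set.Ico (0:ℝ) 1, HasDerivAt f (f' x) x)
    (hmono : ∀ x ∈ Set.Ico (0:ℝ) 1, ∀ y ∈ Set.Ico (0:ℝ) 1, x ≤ y → f' x ≤ f' y)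
    (hfa : f' a = 0) :
    ∀ x ∈ Set.Ico (0:ℝ) 1, f a ≤ f x := by
  intro x hx
  rcases le_total x a with h | h
  · have hsub : Set.Icc x a ⊆ Set.Ico (0:ℝ) 1 := fun z hz =>
      ⟨le_trans hx.1 hz.1, lt_of_le_of_lt hz.2 ha.2⟩
    have hanti : AntitoneOn f (Set.Icc x a) := by
      apply aux_antiOn_Icc f f'
      · exact fun z hz => hd z (hsub hz)
      · intro z hz
        have hz' := hsub hz
        have h1 := hmono z hz' a ha hz.2
        rw [hfa] at h1
        exact h1
    exact hanti ⟨le_refl x, h⟩ ⟨h, le_refl a⟩ h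
  · have hsub : Set.Icc a x ⊆ Set.Ico (0:ℝ) 1 := fun z hz =>
      ⟨le_trans ha.1 hz.1, lt_of_le_of_lt hz.2 hx.2⟩
    have hmonoF : MonotoneOn f (Set.Icc a x) := by
      apply aux_monoOn_Icc f f'
      · exact fun z hz => hd z (hsub hz)
      · intro z hz
        have hz' := hsub hz
        have h1 := hmono a ha z hz' hz.1
        rw [hfa] at h1
        exact h1
    exact hmonoF ⟨le_refl a, h⟩ ⟨h, le_refl x⟩ h

/-- Nonnegative derivative on `[0,1)` gives monotonicity there. -/
lemma aux_monoOn_Ico (f f' : ℝ → ℝ)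
    (hd : ∀ x ∈ Set.Ico (0:ℝ) 1, HasDerivAt f (f' x) x)
    (h0 : ∀ x ∈ Set.Ico (0:ℝ) 1, 0 ≤ f' x) : MonotoneOn f (Set.Ico (0:ℝ) 1) := by
  apply monotoneOn_of_deriv_nonneg (convex_Ico 0 1)
  · exact fun x hx => (hd x hx).continuousAt.continuousWithinAt
  · intro x hx
    rw [interior_Ico] at hx
    exact ((hd x (Set.Ioo_subset_Ico_self hx)).differentiableAt).differentiableWithinAt
  · intro x hx
    rw [interior_Ico] at hx
    rw [(hd x (Set.Ioo_subset_Ico_self hx)).deriv]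
    exact h0 x (Set.Ioo_subset_Ico_self hx)

/-- If `0` minimizes `f` on `[0,1)` then the derivative of `f` at `0` is nonnegative. -/
lemma aux_deriv_nonneg_of_min (f : ℝ → ℝ) (f'0 : ℝ)
    (hd : HasDerivAt f f'0 0)
    (hmin : ∀ x ∈ Set.Ico (0:ℝ) 1, f 0 ≤ f x) : 0 ≤ f'0 := by
  have hmin' : IsMinOn f (Set.Ico (0:ℝ) 1) 0 := fun x hx => hmin x hx
  have hloc : IsLocalMinOn f (Set.Ico (0:ℝ) 1) 0 := hmin'.filter_mono inf_le_right
  have hseg : segment ℝ (0:ℝ) (0 + 1/2) ⊆ Set.Ico (0:ℝ) 1 := by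
    rw [zero_add, segment_eq_Icc (by norm_num : (0:ℝ) ≤ 1/2)]
    intro z hz
    exact ⟨hz.1, lt_of_le_of_lt hz.2 (by norm_num)⟩
  have htc : (1/2 : ℝ) ∈ posTangentConeAt (Set.Ico (0:ℝ) 1) 0 :=
    mem_posTangentConeAt_of_segment_subset hseg
  have h := hloc.hasFDerivWithinAt_nonneg (hd.hasDerivWithinAt.hasFDerivWithinAt) htc
  simp only [ContinuousLinearMap.toSpanSingleton_apply,
    smul_eq_mul] at h
  linarith

end Aux

/-- OPR equilibrium characterization. Assume `p < d_A²` and let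
`α_A⁰ ∈ (0,1)` solve `f_A(α) = 2`. Then `(α_A⁰, 0)` is a Nash equilibrium iff
`p ≥ d_B² − λ(α_A⁰)·d_A·d_B/2`. -/
theorem OPR_equilibrium_iff
    (lam lam' c c' : ℝ → ℝ)
    (hlamDeriv : ∀ α ∈ Set.Icc (0:ℝ) 1, HasDerivAt lam (lam' α) α)
    (hlam'Cont : ContinuousOn lam' (Set.Icc (0:ℝ) 1))
    (hlam0 : lam 0 = 0) (hlam1 : lam 1 = 1)
    (hlam'pos : ∀ α ∈ Set.Icc (0:ℝ) 1, 0 < lam' α)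
    (hlam'anti : ∀ x ∈ Set.Icc (0:ℝ) 1, ∀ y ∈ Set.Icc (0:ℝ) 1, x ≤ y → lam' y ≤ lam' x)
    (hcDeriv : ∀ α ∈ Set.Ico (0:ℝ) 1, HasDerivAt c (c' α) α)
    (hc'Cont : ContinuousOn c' (Set.Ico (0:ℝ) 1))
    (hc0 : c 0 = 0)
    (hc'nonneg : ∀ α ∈ Set.Ico (0:ℝ) 1, 0 ≤ c' α)
    (hc'strictMono : ∀ x ∈ Set.Ico (0:ℝ) 1, ∀ y ∈ Set.Ico (0:ℝ) 1, x < y → c' x < c' y)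
    (hc'top : Filter.Tendsto c' (nhdsWithin 1 (Set.Iio 1)) Filter.atTop)
    (thA thB muG dA dB : ℝ)
    (hdA : dA = thA - muG) (hdB : dB = thB - muG)
    (hdAne : dA ≠ 0) (hdBne : dB ≠ 0)
    (hp : c' 0 / lam' 0 < dA ^ 2)
    (aA0 : ℝ) (haA0 : aA0 ∈ Set.Ioo (0:ℝ) 1) (hfaA0 : fFun lam lam' c' dA aA0 = 2) :
    IsNashEq lam c thA thB muG aA0 0 ↔
      c' 0 / lam' 0 ≥ dB ^ 2 - lam aA0 * dA * dB / 2 := by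
  obtain ⟨haApos, haAlt⟩ := haA0
  have hmemA : aA0 ∈ Set.Ico (0:ℝ) 1 := ⟨haApos.le, haAlt⟩
  have h01 : (0:ℝ) ∈ Set.Ico (0:ℝ) 1 := ⟨le_refl _, one_pos⟩
  have hl0pos : 0 < lam' 0 := hlam'pos 0 ⟨le_refl _, zero_le_one⟩
  have hthA : thA = muG + dA := by rw [hdA]; ring
  have hthB : thB = muG + dB := by rw [hdB]; ring
  have hIcoIcc : Set.Ico (0:ℝ) 1 ⊆ Set.Icc 0 1 := Set.Ico_subset_Icc_self
  have hlamMono : MonotoneOn lam (Set.Icc (0:ℝ) 1) := by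
    apply monotoneOn_of_deriv_nonneg (convex_Icc 0 1)
    · exact fun x hx => (hlamDeriv x hx).continuousAt.continuousWithinAt
    · intro x hx
      rw [interior_Icc] at hx
      exact ((hlamDeriv x (Set.Ioo_subset_Icc_self hx)).differentiableAt).differentiableWithinAt
    · intro x hx
      rw [interior_Icc] at hx
      rw [(hlamDeriv x (Set.Ioo_subset_Icc_self hx)).deriv]
      exact (hlam'pos x (Set.Ioo_subset_Icc_self hx)).le
  have hlam_nonneg : ∀ α ∈ Set.Icc (0:ℝ) 1, 0 ≤ lam α := fun α hα => by
    have := hlamMono ⟨le_refl (0:ℝ), zero_le_one⟩ hα hα.1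
    rwa [hlam0] at this
  have hlam_le1 : ∀ α ∈ Set.Icc (0:ℝ) 1, lam α ≤ 1 := fun α hα => by
    have := hlamMono hα ⟨zero_le_one, le_refl (1:ℝ)⟩ hα.2
    rwa [hlam1] at this
  have hc'mono : ∀ x ∈ Set.Ico (0:ℝ) 1, ∀ y ∈ Set.Ico (0:ℝ) 1, x ≤ y → c' x ≤ c' y := by
    intro x hx y hy hxy
    rcases eq_or_lt_of_le hxy with h | h
    · rw [h]
    · exact (hc'strictMono x hx y hy h).le
  -- rewriting the losses
  have hLA : ∀ α, lossA lam c thA thB muG α 0 = (dA*(2 - lam α)/2)^2 + c α := by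
    intro α
    simp only [lossA, teamDec, hlam0]
    rw [hthA, hthB]
    ring
  have hLB : ∀ α, lossB lam c thA thB muG aA0 α
      = ((dB*(2 - lam α) - lam aA0 * dA)/2)^2 + c α := by
    intro α
    simp only [lossB, teamDec]
    rw [hthA, hthB]
    ring
  -- derivatives
  have hgAd : ∀ α ∈ Set.Ico (0:ℝ) 1, HasDerivAt (fun x => (dA*(2 - lam x)/2)^2 + c x)
      (c' α - dA^2*(2 - lam α)*lam' α/2) α := by
    intro α hα
    have h1 := (((hlamDeriv α (hIcoIcc hα)).const_sub 2).const_mul dA).div_const 2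
    have h2 := (h1.pow 2).add (hcDeriv α hα)
    refine h2.congr_deriv ?_
    push_cast
    ring
  have hgBd : ∀ α ∈ Set.Ico (0:ℝ) 1,
      HasDerivAt (fun x => ((dB*(2 - lam x) - lam aA0*dA)/2)^2 + c x)
      (c' α - (dB*(2 - lam α) - lam aA0*dA)*dB*lam' α/2) α := by
    intro α hα
    have h1 := ((((hlamDeriv α (hIcoIcc hα)).const_sub 2).const_mul dB).sub_const
      (lam aA0*dA)).div_const 2
    have h2 := (h1.pow 2).add (hcDeriv α hα)
    refine h2.congr_deriv ?_
    push_cast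
    ring
  have hdA2pos : 0 < dA^2 := by positivity
  have hl'aA0 : 0 < lam' aA0 := hlam'pos aA0 (hIcoIcc hmemA)
  -- the critical point equation
  have hfa : c' aA0 - dA^2*(2 - lam aA0)*lam' aA0/2 = 0 := by
    have h := hfaA0
    simp only [fFun] at h
    field_simp at h
    nlinarith [h]
  -- monotonicity of Alice's marginal loss
  have hgA'mono : ∀ x ∈ Set.Ico (0:ℝ) 1, ∀ y ∈ Set.Ico (0:ℝ) 1, x ≤ y →
      c' x - dA^2*(2 - lam x)*lam' x/2 ≤ c' y - dA^2*(2 - lam y)*lam' y/2 := by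
    intro x hx y hy hxy
    have h1 := hc'mono x hx y hy hxy
    have h2 : lam x ≤ lam y := hlamMono (hIcoIcc hx) (hIcoIcc hy) hxy
    have h3 : lam y ≤ 1 := hlam_le1 y (hIcoIcc hy)
    have h4 : 0 < lam' y := hlam'pos y (hIcoIcc hy)
    have h5 : lam' y ≤ lam' x := hlam'anti x (hIcoIcc hx) y (hIcoIcc hy) hxy
    have h6 : (2 - lam y)*lam' y ≤ (2 - lam x)*lam' x := by nlinarith
    nlinarith [mul_le_mul_of_nonneg_left h6 hdA2pos.le]
  -- Alice's best response (unconditional)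
  have hminA : ∀ x ∈ Set.Ico (0:ℝ) 1,
      lossA lam c thA thB muG aA0 0 ≤ lossA lam c thA thB muG x 0 := by
    intro x hx
    rw [hLA, hLA]
    exact aux_min_of_deriv (fun x => (dA*(2 - lam x)/2)^2 + c x)
      (fun α => c' α - dA^2*(2 - lam α)*lam' α/2) aA0 hmemA hgAd hgA'mono hfa x hx
  -- the condition is equivalent to nonnegativity of Bob's marginal loss at 0
  have hcond : (c' 0 / lam' 0 ≥ dB ^ 2 - lam aA0 * dA * dB / 2) ↔
      0 ≤ c' 0 - (dB*(2 - lam 0) - lam aA0*dA)*dB*lam' 0/2 := by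
    rw [ge_iff_le, le_div_iff₀ hl0pos, hlam0]
    constructor <;> intro h <;> nlinarith
  constructor
  · rintro ⟨-, -, -, hB⟩
    have hmin : ∀ x ∈ Set.Ico (0:ℝ) 1,
        (fun α => ((dB*(2 - lam α) - lam aA0*dA)/2)^2 + c α) 0
        ≤ (fun α => ((dB*(2 - lam α) - lam aA0*dA)/2)^2 + c α) x := by
      intro x hx
      simp only
      rw [← hLB, ← hLB]
      exact hB x hx
    exact hcond.mpr (aux_deriv_nonneg_of_min _ _ (hgBd 0 h01) hmin)
  · intro h
    have h0 : 0 ≤ c' 0 - (dB*(2 - lam 0) - lam aA0*dA)*dB*lam' 0/2 := hcond.mp h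
    have hkey : ∀ α ∈ Set.Ico (0:ℝ) 1,
        0 ≤ c' α - (dB*(2 - lam α) - lam aA0*dA)*dB*lam' α/2 := by
      intro α hα
      have hlge : 0 ≤ lam α := hlam_nonneg α (hIcoIcc hα)
      have hl'α : 0 < lam' α := hlam'pos α (hIcoIcc hα)
      have hl'le : lam' α ≤ lam' 0 := hlam'anti 0 ⟨le_refl _, zero_le_one⟩ α (hIcoIcc hα) hα.1
      have hc'le : c' 0 ≤ c' α := hc'mono 0 h01 α hα hα.1
      have hcα : 0 ≤ c' α := hc'nonneg α hα
      rcases le_or_gt ((dB*(2 - lam α) - lam aA0*dA)*dB) 0 with hT | hT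
      · nlinarith [mul_nonneg (neg_nonneg.2 hT) hl'α.le]
      · have hT0 : (dB*(2 - lam α) - lam aA0*dA)*dB ≤ (dB*(2 - lam 0) - lam aA0*dA)*dB := by
          rw [hlam0]
          nlinarith [mul_nonneg (sq_nonneg dB) hlge]
        have hmul : ((dB*(2 - lam α) - lam aA0*dA)*dB) * lam' α
            ≤ ((dB*(2 - lam 0) - lam aA0*dA)*dB) * lam' 0 :=
          mul_le_mul hT0 hl'le hl'α.le (le_trans hT.le hT0)
        linarith
    have hmonoB := aux_monoOn_Ico (fun α => ((dB*(2 - lam α) - lam aA0*dA)/2)^2 + c α)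
      (fun α => c' α - (dB*(2 - lam α) - lam aA0*dA)*dB*lam' α/2) hgBd hkey
    refine ⟨hmemA, h01, hminA, ?_⟩
    intro x hx
    rw [hLB, hLB]
    exact hmonoB h01 hx hx.1
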